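/- Let N ≥ 4, ε > 0, a₁, a₂ ∈ ℝ, and let π = (π_ij) be a symmetric trace-free real (N−1)×(N−1) matrix. With Φ as in the decomposition lemma, there exists a constant C > 0 depending only on N, a₁ and a₂ such that for all x in the closed upper half-space ℝ^N_+: |Φ(x)| ≤ C ε |π|_∞ / (1 + |x|^{N−3}) and |∇Φ(x)| ≤ C ε |π|_∞ / (1 + |x|^{N−2}), where |π|_∞ = max_{i,j} |π_ij|. -/

import Mathlib

open MeasureTheory Filter Topology

noncomputable section

/-- The model for `ℝ^N_+`: pairs `(x̄, t)` with `x̄ ∈ ℝ^n` (Euclidean) and `t ∈ ℝ`;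
the open upper half-space is `{p | 0 < p.2}`. -/
abbrev HSp (n : ℕ) := EuclideanSpace ℝ (Fin n) × ℝ

/-- The open upper half-space. -/
def upperHalf (n : ℕ) : Set (HSp n) := {p | 0 < p.2}

/-- Directional derivative of `f` at `x` in direction `v`. -/
def pdv {n : ℕ} (v : HSp n) (f : HSp n → ℝ) (x : HSp n) : ℝ := fderiv ℝ f x v

/-- The `i`-th horizontal standard basis vector. -/
def eH {n : ℕ} (i : Fin n) : HSp n := (EuclideanSpace.single i 1, 0)

/-- The vertical standard basis vector. -/
def eV {n : ℕ} : HSp n := (0, 1)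

/-- The Laplacian `Δf = ∑ᵢ ∂ᵢᵢ f + ∂_NN f`. -/
def lap {n : ℕ} (f : HSp n → ℝ) (x : HSp n) : ℝ :=
  (∑ i : Fin n, pdv (eH i) (pdv (eH i) f) x) + pdv eV (pdv eV f) x

/-- The Euclidean length `|x|` of a point `x = (x̄, t)`. -/
def rad {n : ℕ} (x : HSp n) : ℝ := Real.sqrt (‖x.1‖ ^ 2 + x.2 ^ 2)

/-- The bubble `W_{λ,ξ}`. -/
def Bub (N : ℕ) (lam : ℝ) (ξ : EuclideanSpace ℝ (Fin (N - 1))) (x : HSp (N - 1)) : ℝ :=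
  lam ^ (((N : ℝ) - 2) / 2) / (‖x.1 - ξ‖ ^ 2 + (x.2 + lam) ^ 2) ^ (((N : ℝ) - 2) / 2)

/-- The trace `w_{λ,ξ}` of the bubble on the boundary. -/
def bub (N : ℕ) (lam : ℝ) (ξ y : EuclideanSpace ℝ (Fin (N - 1))) : ℝ := Bub N lam ξ (y, 0)

open scoped InnerProductSpace

namespace PhiAux

variable {n : ℕ}

/-- coordinate bound -/
lemma abs_coord_le (y : EuclideanSpace ℝ (Fin n)) (i : Fin n) : |y i| ≤ ‖y‖ := by
  rw [EuclideanSpace.norm_eq, ← Real.sqrt_sq_eq_abs]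
  apply Real.sqrt_le_sqrt
  calc y i ^ 2 = ‖y i‖ ^ 2 := by rw [Real.norm_eq_abs, sq_abs]
  _ ≤ ∑ j, ‖y j‖ ^ 2 :=
      Finset.single_le_sum (f := fun j => ‖y j‖^2) (fun j _ => sq_nonneg _) (Finset.mem_univ i)

def Dfun (y : HSp n) : ℝ := ⟪y.1, y.1⟫_ℝ + (y.2+1)*(y.2+1)

lemma Dfun_eq (y : HSp n) : Dfun y = ‖y.1‖^2 + (y.2+1)^2 := by
  rw [Dfun, real_inner_self_eq_norm_sq, ← pow_two]

def Ffun (N : ℕ) (a₁ a₂ ε : ℝ) (π : Fin n → Fin n → ℝ) (y : HSp n) : ℝ :=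
  (ε * ∑ i, ∑ j, π i j * y.1 i * y.1 j) * (Dfun y) ^ (-((N:ℝ)/2)) *
  (((N:ℝ)-2)/2 * (y.2 - 1) + (a₁ * (y.2+1)) * (Dfun y) ^ (-(2:ℝ))
    + a₂ * (Dfun y) ^ (-(1:ℝ)))

def cLD (x : HSp n) : HSp n →L[ℝ] ℝ :=
  (fderivInnerCLM ℝ (x.1, x.1)).comp
    ((ContinuousLinearMap.fst ℝ (EuclideanSpace ℝ (Fin n)) ℝ).prod
     (ContinuousLinearMap.fst ℝ (EuclideanSpace ℝ (Fin n)) ℝ))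
  + ((x.2+1) • ContinuousLinearMap.snd ℝ (EuclideanSpace ℝ (Fin n)) ℝ
     + (x.2+1) • ContinuousLinearMap.snd ℝ (EuclideanSpace ℝ (Fin n)) ℝ)

lemma hasFDerivAt_Dfun (x : HSp n) : HasFDerivAt Dfun (cLD x) x :=
  (hasFDerivAt_fst.inner ℝ hasFDerivAt_fst).add
      ((hasFDerivAt_snd.add_const 1).mul (hasFDerivAt_snd.add_const 1))

lemma cLD_apply (x v : HSp n) :
    cLD x v = ⟪x.1, v.1⟫_ℝ + ⟪v.1, x.1⟫_ℝ + ((x.2+1)*v.2 + (x.2+1)*v.2) := by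
  simp [cLD, fderivInnerCLM_apply]

lemma abs_cLD_apply_le (x v : HSp n) :
    |cLD x v| ≤ 4 * Real.sqrt (Dfun x) * ‖v‖ := by
  have hD := Dfun_eq x
  set σ := Real.sqrt (Dfun x) with hσ
  have h1 : ‖x.1‖ ≤ σ := by
    have h : ‖x.1‖^2 ≤ Dfun x := by rw [hD]; nlinarith [sq_nonneg (x.2+1)]
    calc ‖x.1‖ = Real.sqrt (‖x.1‖^2) := (Real.sqrt_sq (norm_nonneg _)).symm
      _ ≤ σ := Real.sqrt_le_sqrt h
  have h2 : |x.2+1| ≤ σ := by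
    have h : (x.2+1)^2 ≤ Dfun x := by rw [hD]; nlinarith [sq_nonneg ‖x.1‖]
    calc |x.2+1| = Real.sqrt ((x.2+1)^2) := (Real.sqrt_sq_eq_abs _).symm
      _ ≤ σ := Real.sqrt_le_sqrt h
  have hv1 : ‖v.1‖ ≤ ‖v‖ := norm_fst_le v
  have hv2 : |v.2| ≤ ‖v‖ := norm_snd_le v
  have hσ0 : 0 ≤ σ := Real.sqrt_nonneg _
  have j1 : |⟪x.1, v.1⟫_ℝ| ≤ σ * ‖v‖ :=
    (abs_real_inner_le_norm _ _).trans (mul_le_mul h1 hv1 (norm_nonneg _) hσ0)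
  have j2 : |⟪v.1, x.1⟫_ℝ| ≤ σ * ‖v‖ := by rw [real_inner_comm]; exact j1
  have j3 : |(x.2+1)*v.2| ≤ σ * ‖v‖ :=
    (abs_mul _ _).le.trans (mul_le_mul h2 hv2 (abs_nonneg _) hσ0)
  rw [cLD_apply]
  calc |⟪x.1, v.1⟫_ℝ + ⟪v.1, x.1⟫_ℝ + ((x.2+1)*v.2 + (x.2+1)*v.2)|
      ≤ |⟪x.1, v.1⟫_ℝ| + |⟪v.1, x.1⟫_ℝ| + (|(x.2+1)*v.2| + |(x.2+1)*v.2|) :=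
        (abs_add_le _ _).trans (by gcongr <;> exact abs_add_le _ _)
    _ ≤ 4 * σ * ‖v‖ := by linarith

def cLc (i : Fin n) : HSp n →L[ℝ] ℝ :=
  (EuclideanSpace.proj i).comp (ContinuousLinearMap.fst ℝ (EuclideanSpace ℝ (Fin n)) ℝ)

def cLQ (π : Fin n → Fin n → ℝ) (x : HSp n) : HSp n →L[ℝ] ℝ :=
  ∑ i, ∑ j, ((π i j * x.1 i) • cLc j + x.1 j • (π i j • cLc i))

lemma hasFDerivAt_Qfun (π : Fin n → Fin n → ℝ) (x : HSp n) :
    HasFDerivAt (fun y : HSp n => ∑ i, ∑ j, π i j * y.1 i * y.1 j) (cLQ π x) x := by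
  have hc : ∀ i : Fin n, HasFDerivAt (fun y : HSp n => y.1 i) (cLc i) x := fun i =>
    (cLc i).hasFDerivAt
  exact HasFDerivAt.fun_sum fun i _ => HasFDerivAt.fun_sum fun j _ =>
    ((hc i).const_mul (π i j)).mul (hc j)

lemma cLQ_apply (π : Fin n → Fin n → ℝ) (x v : HSp n) :
    cLQ π x v = ∑ i, ∑ j, (π i j * x.1 i * v.1 j + x.1 j * (π i j * v.1 i)) := by
  simp [cLQ, cLc, mul_assoc]

lemma abs_cLQ_apply_le (π : Fin n → Fin n → ℝ) (x v : HSp n) {M : ℝ} (hM0 : 0 ≤ M)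
    (hM : ∀ i j, |π i j| ≤ M) :
    |cLQ π x v| ≤ (n:ℝ)^2 * (2 * M * ‖x.1‖) * ‖v‖ := by
  have hv1 : ‖v.1‖ ≤ ‖v‖ := norm_fst_le v
  have hterm : ∀ i j : Fin n, |π i j * x.1 i * v.1 j + x.1 j * (π i j * v.1 i)|
      ≤ 2*M*‖x.1‖*‖v‖ := by
    intro i j
    have b1 : |x.1 i| ≤ ‖x.1‖ := abs_coord_le x.1 i
    have b2 : |x.1 j| ≤ ‖x.1‖ := abs_coord_le x.1 j
    have c1 : |v.1 i| ≤ ‖v‖ := (abs_coord_le v.1 i).trans hv1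
    have c2 : |v.1 j| ≤ ‖v‖ := (abs_coord_le v.1 j).trans hv1
    have p1 : |π i j * x.1 i * v.1 j| ≤ M * ‖x.1‖ * ‖v‖ := by
      rw [abs_mul, abs_mul]; gcongr; exact hM i j
    have p2 : |x.1 j * (π i j * v.1 i)| ≤ ‖x.1‖ * (M * ‖v‖) := by
      rw [abs_mul, abs_mul]; gcongr; exact hM i j
    calc |π i j * x.1 i * v.1 j + x.1 j * (π i j * v.1 i)|
        ≤ |π i j * x.1 i * v.1 j| + |x.1 j * (π i j * v.1 i)| := abs_add_le _ _
      _ ≤ 2*M*‖x.1‖*‖v‖ := by nlinarith [p1, p2]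
  calc |cLQ π x v|
      = |∑ i, ∑ j, (π i j * x.1 i * v.1 j + x.1 j * (π i j * v.1 i))| := by rw [cLQ_apply]
    _ ≤ ∑ i, ∑ j, |π i j * x.1 i * v.1 j + x.1 j * (π i j * v.1 i)| :=
        (Finset.abs_sum_le_sum_abs _ _).trans
          (Finset.sum_le_sum fun i _ => Finset.abs_sum_le_sum_abs _ _)
    _ ≤ ∑ _i : Fin n, ∑ _j : Fin n, 2*M*‖x.1‖*‖v‖ :=
        Finset.sum_le_sum fun i _ => Finset.sum_le_sum fun j _ => hterm i j
    _ = (n:ℝ)^2 * (2 * M * ‖x.1‖) * ‖v‖ := by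
        simp [Finset.sum_const, Finset.card_univ]; ring

def Qval (π : Fin n → Fin n → ℝ) (x : HSp n) : ℝ := ∑ i, ∑ j, π i j * x.1 i * x.1 j

lemma abs_Qval_le (π : Fin n → Fin n → ℝ) (x : HSp n) {M : ℝ} (hM0 : 0 ≤ M)
    (hM : ∀ i j, |π i j| ≤ M) :
    |Qval π x| ≤ (n:ℝ)^2 * M * ‖x.1‖^2 := by
  have hterm : ∀ i j : Fin n, |π i j * x.1 i * x.1 j| ≤ M * ‖x.1‖^2 := by
    intro i j
    have b1 : |x.1 i| ≤ ‖x.1‖ := abs_coord_le x.1 i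
    have b2 : |x.1 j| ≤ ‖x.1‖ := abs_coord_le x.1 j
    calc |π i j * x.1 i * x.1 j| = |π i j| * |x.1 i| * |x.1 j| := by rw [abs_mul, abs_mul]
      _ ≤ M * ‖x.1‖ * ‖x.1‖ := by
          gcongr <;> (first | exact hM i j | exact mul_nonneg hM0 (norm_nonneg _) | exact b1 | exact b2)
      _ = M * ‖x.1‖^2 := by ring
  calc |Qval π x| ≤ ∑ i, ∑ j, |π i j * x.1 i * x.1 j| :=
        (Finset.abs_sum_le_sum_abs _ _).trans
          (Finset.sum_le_sum fun i _ => Finset.abs_sum_le_sum_abs _ _)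
    _ ≤ ∑ _i : Fin n, ∑ _j : Fin n, M * ‖x.1‖^2 :=
        Finset.sum_le_sum fun i _ => Finset.sum_le_sum fun j _ => hterm i j
    _ = (n:ℝ)^2 * M * ‖x.1‖^2 := by simp [Finset.sum_const, Finset.card_univ]; ring

def Bval (N : ℕ) (a₁ a₂ : ℝ) (x : HSp n) : ℝ :=
  ((N:ℝ)-2)/2 * (x.2 - 1) + (a₁ * (x.2+1)) * (Dfun x) ^ (-(2:ℝ)) + a₂ * (Dfun x) ^ (-(1:ℝ))

def cLB (N : ℕ) (a₁ a₂ : ℝ) (x : HSp n) : HSp n →L[ℝ] ℝ :=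
  (((N:ℝ)-2)/2) • ContinuousLinearMap.snd ℝ (EuclideanSpace ℝ (Fin n)) ℝ
  + ((a₁*(x.2+1)) • ((-(2:ℝ) * (Dfun x) ^ (-(2:ℝ)-1)) • cLD x)
     + ((Dfun x) ^ (-(2:ℝ))) • (a₁ • ContinuousLinearMap.snd ℝ (EuclideanSpace ℝ (Fin n)) ℝ))
  + a₂ • ((-(1:ℝ) * (Dfun x) ^ (-(1:ℝ)-1)) • cLD x)

def cLF (N : ℕ) (a₁ a₂ ε : ℝ) (π : Fin n → Fin n → ℝ) (x : HSp n) : HSp n →L[ℝ] ℝ :=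
  ((ε * Qval π x) * (Dfun x) ^ (-((N:ℝ)/2))) • cLB N a₁ a₂ x
  + (Bval N a₁ a₂ x) • ((ε * Qval π x) • ((-((N:ℝ)/2) * (Dfun x) ^ (-((N:ℝ)/2)-1)) • cLD x)
      + ((Dfun x) ^ (-((N:ℝ)/2))) • (ε • cLQ π x))

lemma hasFDerivAt_Ffun (N : ℕ) (a₁ a₂ ε : ℝ) (π : Fin n → Fin n → ℝ) (x : HSp n)
    (hd0 : 0 < Dfun x) :
    HasFDerivAt (Ffun N a₁ a₂ ε π) (cLF N a₁ a₂ ε π x) x := by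
  have hD := hasFDerivAt_Dfun x
  have hQ := hasFDerivAt_Qfun π x
  have hDp := hD.rpow_const (p := -((N:ℝ)/2)) (Or.inl hd0.ne')
  have hB2 := hD.rpow_const (p := -(2:ℝ)) (Or.inl hd0.ne')
  have hB1 := hD.rpow_const (p := -(1:ℝ)) (Or.inl hd0.ne')
  exact ((hQ.const_mul ε).mul hDp).mul
    ((((hasFDerivAt_snd.sub_const 1).const_mul (((N:ℝ)-2)/2)).add
      (((hasFDerivAt_snd.add_const 1).const_mul a₁).mul hB2)).add (hB1.const_mul a₂))

lemma one_le_Dfun (x : HSp n) (hx : 0 ≤ x.2) : 1 ≤ Dfun x := by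
  rw [Dfun_eq]; nlinarith [sq_nonneg ‖x.1‖]

lemma norm_fst_le_sqrtD (x : HSp n) : ‖x.1‖ ≤ Real.sqrt (Dfun x) := by
  have h : ‖x.1‖^2 ≤ Dfun x := by rw [Dfun_eq]; nlinarith [sq_nonneg (x.2+1)]
  calc ‖x.1‖ = Real.sqrt (‖x.1‖^2) := (Real.sqrt_sq (norm_nonneg _)).symm
    _ ≤ _ := Real.sqrt_le_sqrt h

lemma abs_snd_add_one_le_sqrtD (x : HSp n) : |x.2+1| ≤ Real.sqrt (Dfun x) := by
  have h : (x.2+1)^2 ≤ Dfun x := by rw [Dfun_eq]; nlinarith [sq_nonneg ‖x.1‖]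
  calc |x.2+1| = Real.sqrt ((x.2+1)^2) := (Real.sqrt_sq_eq_abs _).symm
    _ ≤ _ := Real.sqrt_le_sqrt h

lemma rpow_neg_ofNat (d : ℝ) (hd : 0 < d) (k : ℕ) : d ^ (-(k:ℝ)) = (d^k)⁻¹ := by
  rw [Real.rpow_neg hd.le, Real.rpow_natCast]

set_option maxHeartbeats 1000000 in
lemma abs_cLB_apply_le (N : ℕ) (a₁ a₂ : ℝ) (x v : HSp n) (hN : 2 ≤ N) (hx : 0 ≤ x.2) :
    |cLB N a₁ a₂ x v| ≤ ((N:ℝ)/2 + 9*|a₁| + 4*|a₂| + 1) * ‖v‖ := by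
  have hd1 : 1 ≤ Dfun x := one_le_Dfun x hx
  have hd0 : (0:ℝ) < Dfun x := lt_of_lt_of_le one_pos hd1
  set d := Dfun x with hd
  set σ := Real.sqrt d with hσ
  have hσ1 : 1 ≤ σ := by
    rw [hσ, show (1:ℝ) = Real.sqrt 1 by simp]; exact Real.sqrt_le_sqrt hd1
  have hσσ : σ * σ = d := Real.mul_self_sqrt hd0.le
  have hσ0 : (0:ℝ) < σ := lt_of_lt_of_le one_pos hσ1
  have ht1 : x.2+1 ≤ σ := by
    have := abs_snd_add_one_le_sqrtD x; rwa [abs_of_nonneg (by linarith)] at this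
  have ht0 : (0:ℝ) ≤ x.2+1 := by linarith
  have e3 : d ^ (-(2:ℝ)-1) = (d^3)⁻¹ := by
    rw [show (-(2:ℝ)-1) = -((3:ℕ):ℝ) by norm_num]; exact rpow_neg_ofNat d hd0 3
  have e2 : d ^ (-(2:ℝ)) = (d^2)⁻¹ := by
    rw [show (-(2:ℝ)) = -((2:ℕ):ℝ) by norm_num]; exact rpow_neg_ofNat d hd0 2
  have e2' : d ^ (-(1:ℝ)-1) = (d^2)⁻¹ := by
    rw [show (-(1:ℝ)-1) = -((2:ℕ):ℝ) by norm_num]; exact rpow_neg_ofNat d hd0 2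
  have happ : cLB N a₁ a₂ x v
      = ((N:ℝ)-2)/2 * v.2 + ((a₁*(x.2+1)) * ((-(2:ℝ) * (d^3)⁻¹) * cLD x v)
          + (d^2)⁻¹ * (a₁ * v.2)) + a₂ * ((-(1:ℝ) * (d^2)⁻¹) * cLD x v) := by
    simp [cLB, ← hd, e3, e2, e2']
  have hA : |cLD x v| ≤ 4*σ*‖v‖ := abs_cLD_apply_le x v
  have hA0 : (0:ℝ) ≤ |cLD x v| := abs_nonneg _
  have hv2 : |v.2| ≤ ‖v‖ := norm_snd_le v
  have hw0 : (0:ℝ) ≤ ‖v‖ := norm_nonneg _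
  have hN2 : (2:ℝ) ≤ (N:ℝ) := by exact_mod_cast hN
  have g1 : d * (d^3)⁻¹ ≤ 1 := by
    rw [show d * (d^3)⁻¹ = (d^2)⁻¹ by field_simp]
    exact inv_le_one_of_one_le₀ (by nlinarith)
  have g2 : (d^2)⁻¹ ≤ 1 := inv_le_one_of_one_le₀ (by nlinarith)
  have g3 : σ * (d^2)⁻¹ ≤ 1 := by
    have hσd2 : σ ≤ d^2 := by nlinarith
    calc σ * (d^2)⁻¹ ≤ d^2 * (d^2)⁻¹ := by gcongr
      _ = 1 := by field_simp
  have gi3 : (0:ℝ) ≤ (d^3)⁻¹ := by positivity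
  have gi2 : (0:ℝ) ≤ (d^2)⁻¹ := by positivity
  have k1 : |((N:ℝ)-2)/2 * v.2| ≤ (N:ℝ)/2 * ‖v‖ := by
    rw [abs_mul, abs_of_nonneg (by linarith : (0:ℝ) ≤ ((N:ℝ)-2)/2)]
    gcongr <;> linarith
  have k2a : |(a₁*(x.2+1)) * ((-(2:ℝ) * (d^3)⁻¹) * cLD x v)| ≤ 8*|a₁| *‖v‖ := by
    calc |(a₁*(x.2+1)) * ((-(2:ℝ) * (d^3)⁻¹) * cLD x v)|
        = |a₁| * (x.2+1) * (2 * (d^3)⁻¹ * |cLD x v|) := by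
          rw [abs_mul, abs_mul, abs_mul, abs_mul, abs_neg,
            abs_of_nonneg ht0, abs_of_nonneg gi3]
          norm_num
      _ ≤ |a₁| * σ * (2 * (d^3)⁻¹ * (4*σ*‖v‖)) := by gcongr
      _ = 8*|a₁| * ((σ*σ) * (d^3)⁻¹) * ‖v‖ := by ring
      _ = 8*|a₁| * (d * (d^3)⁻¹) * ‖v‖ := by rw [hσσ]
      _ ≤ 8*|a₁| * 1 * ‖v‖ := by gcongr
      _ = 8*|a₁| *‖v‖ := by ring
  have k2b : |(d^2)⁻¹ * (a₁ * v.2)| ≤ |a₁| * ‖v‖ := by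
    calc |(d^2)⁻¹ * (a₁ * v.2)| = (d^2)⁻¹ * (|a₁| * |v.2|) := by
          rw [abs_mul, abs_mul, abs_of_nonneg gi2]
      _ ≤ 1 * (|a₁| * ‖v‖) := by gcongr
      _ = |a₁| * ‖v‖ := by ring
  have k3 : |a₂ * ((-(1:ℝ) * (d^2)⁻¹) * cLD x v)| ≤ 4*|a₂| *‖v‖ := by
    calc |a₂ * ((-(1:ℝ) * (d^2)⁻¹) * cLD x v)|
        = |a₂| * ((d^2)⁻¹ * |cLD x v|) := by
          rw [abs_mul, abs_mul, abs_mul, abs_neg, abs_of_nonneg gi2]; norm_num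
      _ ≤ |a₂| * ((d^2)⁻¹ * (4*σ*‖v‖)) := by gcongr
      _ = 4*|a₂| * (σ * (d^2)⁻¹) * ‖v‖ := by ring
      _ ≤ 4*|a₂| * 1 * ‖v‖ := by gcongr
      _ = 4*|a₂| *‖v‖ := by ring
  calc |cLB N a₁ a₂ x v|
      ≤ |((N:ℝ)-2)/2 * v.2| + (|(a₁*(x.2+1)) * ((-(2:ℝ) * (d^3)⁻¹) * cLD x v)|
          + |(d^2)⁻¹ * (a₁ * v.2)|) + |a₂ * ((-(1:ℝ) * (d^2)⁻¹) * cLD x v)| := by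
        rw [happ]
        exact (abs_add_three _ _ _).trans (by gcongr; exact abs_add_le _ _)
    _ ≤ ((N:ℝ)/2 + 9*|a₁| + 4*|a₂| + 1) * ‖v‖ := by nlinarith

lemma mul_abs_le {a b A B : ℝ} (ha : |a| ≤ A) (hb : |b| ≤ B) : |a*b| ≤ A*B := by
  rw [abs_mul]; exact mul_le_mul ha hb (abs_nonneg _) ((abs_nonneg a).trans ha)

lemma sqrt_pow_eq_rpow (d : ℝ) (hd : 0 ≤ d) (N : ℕ) :
    (Real.sqrt d)^N = d ^ ((N:ℝ)/2) := by
  rw [Real.sqrt_eq_rpow, ← Real.rpow_natCast (d ^ ((1:ℝ)/2)) N, ← Real.rpow_mul hd]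
  congr 1; ring

lemma abs_Bval_le (N : ℕ) (a₁ a₂ : ℝ) (x : HSp n) (hN : 2 ≤ N) (hx : 0 ≤ x.2) :
    |Bval N a₁ a₂ x| ≤ ((N:ℝ)/2 + 9*|a₁| + 4*|a₂| + 1) * Real.sqrt (Dfun x) := by
  have hd1 : 1 ≤ Dfun x := one_le_Dfun x hx
  have hd0 : (0:ℝ) < Dfun x := lt_of_lt_of_le one_pos hd1
  set d := Dfun x with hd
  set σ := Real.sqrt d with hσ
  have hσ1 : 1 ≤ σ := by
    rw [hσ, show (1:ℝ) = Real.sqrt 1 by simp]; exact Real.sqrt_le_sqrt hd1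
  have hσσ : σ * σ = d := Real.mul_self_sqrt hd0.le
  have ht1 : x.2+1 ≤ σ := by
    have := abs_snd_add_one_le_sqrtD x; rwa [abs_of_nonneg (by linarith)] at this
  have hN2 : (2:ℝ) ≤ (N:ℝ) := by exact_mod_cast hN
  have e2 : d ^ (-(2:ℝ)) = (d^2)⁻¹ := by
    rw [show (-(2:ℝ)) = -((2:ℕ):ℝ) by norm_num]; exact rpow_neg_ofNat d hd0 2
  have e1 : d ^ (-(1:ℝ)) = d⁻¹ := by
    rw [show (-(1:ℝ)) = -((1:ℕ):ℝ) by norm_num, rpow_neg_ofNat d hd0 1, pow_one]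
  have g2 : (d^2)⁻¹ ≤ 1 := inv_le_one_of_one_le₀ (by nlinarith)
  have g1 : d⁻¹ ≤ 1 := inv_le_one_of_one_le₀ hd1
  have k1 : |((N:ℝ)-2)/2 * (x.2-1)| ≤ (N:ℝ)/2 * σ := by
    have h1 : |x.2-1| ≤ σ := by rw [abs_le]; constructor <;> linarith
    have h2 : |((N:ℝ)-2)/2| ≤ (N:ℝ)/2 := by
      rw [abs_of_nonneg (by linarith)]; linarith
    exact mul_abs_le h2 h1
  have k2 : |(a₁ * (x.2+1)) * d ^ (-(2:ℝ))| ≤ |a₁| * σ := by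
    rw [e2]
    calc |a₁ * (x.2+1) * (d^2)⁻¹| = |a₁| * (x.2+1) * (d^2)⁻¹ := by
          rw [abs_mul, abs_mul, abs_of_nonneg (by linarith : (0:ℝ) ≤ x.2+1),
            abs_of_nonneg (by positivity : (0:ℝ) ≤ (d^2)⁻¹)]
      _ ≤ |a₁| * σ * 1 := by gcongr
      _ = |a₁| * σ := by ring
  have k3 : |a₂ * d ^ (-(1:ℝ))| ≤ |a₂| * σ := by
    rw [e1]
    calc |a₂ * d⁻¹| = |a₂| * d⁻¹ := by
          rw [abs_mul, abs_of_nonneg (by positivity : (0:ℝ) ≤ d⁻¹)]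
      _ ≤ |a₂| * 1 := by gcongr
      _ ≤ |a₂| * σ := by nlinarith [abs_nonneg a₂]
  have habs : |Bval N a₁ a₂ x| ≤ |((N:ℝ)-2)/2 * (x.2-1)| + |(a₁ * (x.2+1)) * d ^ (-(2:ℝ))|
      + |a₂ * d ^ (-(1:ℝ))| := abs_add_three _ _ _
  have hσ0 : (0:ℝ) ≤ σ := Real.sqrt_nonneg _
  nlinarith [abs_nonneg a₁, abs_nonneg a₂]

set_option maxHeartbeats 1000000 in
lemma abs_cLF_apply_le (N : ℕ) (a₁ a₂ ε : ℝ) (π : Fin n → Fin n → ℝ) (x v : HSp n) {M : ℝ}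
    (hN : 2 ≤ N) (hx : 0 ≤ x.2) (hε : 0 ≤ ε) (hM0 : 0 ≤ M) (hM : ∀ i j, |π i j| ≤ M) :
    |cLF N a₁ a₂ ε π x v| ≤ ε * (n:ℝ)^2 * M * ((N:ℝ)/2 + 9*|a₁| + 4*|a₂| + 1)
      * (3 + 2*(N:ℝ)) * ((Real.sqrt (Dfun x))^2 * ((Dfun x) ^ ((N:ℝ)/2))⁻¹) * ‖v‖ := by
  have hd1 : 1 ≤ Dfun x := one_le_Dfun x hx
  have hd0 : (0:ℝ) < Dfun x := lt_of_lt_of_le one_pos hd1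
  set d := Dfun x with hd
  set σ := Real.sqrt d with hσ
  set s := ‖x.1‖ with hs
  set P := d ^ ((N:ℝ)/2) with hP
  have hP0 : (0:ℝ) < P := Real.rpow_pos_of_pos hd0 _
  have hσσ : σ * σ = d := Real.mul_self_sqrt hd0.le
  have hsσ : s ≤ σ := norm_fst_le_sqrtD x
  have hs0 : (0:ℝ) ≤ s := norm_nonneg _
  have hσ0 : (0:ℝ) ≤ σ := Real.sqrt_nonneg _
  have hq0 : (0:ℝ) ≤ (N:ℝ)/2 := by positivity
  have cd1 : d ^ (-((N:ℝ)/2)) = P⁻¹ := by rw [Real.rpow_neg hd0.le, hP]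
  have cd2 : d ^ (-((N:ℝ)/2)-1) = P⁻¹ * d⁻¹ := by
    rw [show -((N:ℝ)/2)-1 = -((N:ℝ)/2) + (-1) by ring, Real.rpow_add hd0, cd1,
      Real.rpow_neg_one]
  have happ : cLF N a₁ a₂ ε π x v
      = (ε * Qval π x * P⁻¹) * cLB N a₁ a₂ x v
        + Bval N a₁ a₂ x * ((ε * Qval π x) * ((-((N:ℝ)/2) * (P⁻¹ * d⁻¹)) * cLD x v)
            + P⁻¹ * (ε * cLQ π x v)) := by
    simp [cLF, ← hd, cd1, cd2, mul_assoc]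
    ring
  set K₂ := (N:ℝ)/2 + 9*|a₁| + 4*|a₂| + 1 with hK₂
  have hK₂0 : (0:ℝ) ≤ K₂ := by positivity
  have hεa : |ε| ≤ ε := le_of_eq (abs_of_nonneg hε)
  have hPa : |P⁻¹| ≤ P⁻¹ := le_of_eq (abs_of_nonneg (by positivity))
  have hQb : |Qval π x| ≤ (n:ℝ)^2 * M * s^2 := abs_Qval_le π x hM0 hM
  have hBb : |Bval N a₁ a₂ x| ≤ K₂ * σ := abs_Bval_le N a₁ a₂ x hN hx
  have hLBb : |cLB N a₁ a₂ x v| ≤ K₂ * ‖v‖ := abs_cLB_apply_le N a₁ a₂ x v hN hx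
  have hAb : |cLD x v| ≤ 4*σ*‖v‖ := abs_cLD_apply_le x v
  have hLQb : |cLQ π x v| ≤ (n:ℝ)^2 * (2*M*s) * ‖v‖ := abs_cLQ_apply_le π x v hM0 hM
  have hqa : |(-((N:ℝ)/2) * (P⁻¹ * d⁻¹))| ≤ (N:ℝ)/2 * (P⁻¹ * d⁻¹) := by
    rw [abs_mul, abs_neg, abs_of_nonneg hq0, abs_of_nonneg (by positivity : (0:ℝ) ≤ P⁻¹*d⁻¹)]
  have hE1 : |(ε * Qval π x * P⁻¹) * cLB N a₁ a₂ x v|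
      ≤ (ε * ((n:ℝ)^2 * M * s^2) * P⁻¹) * (K₂ * ‖v‖) :=
    mul_abs_le (mul_abs_le (mul_abs_le hεa hQb) hPa) hLBb
  have hE2 : |Bval N a₁ a₂ x * ((ε * Qval π x) * ((-((N:ℝ)/2) * (P⁻¹ * d⁻¹)) * cLD x v)
            + P⁻¹ * (ε * cLQ π x v))|
      ≤ (K₂ * σ) * ((ε * ((n:ℝ)^2 * M * s^2)) * (((N:ℝ)/2 * (P⁻¹ * d⁻¹)) * (4*σ*‖v‖))
            + P⁻¹ * (ε * ((n:ℝ)^2 * (2*M*s) * ‖v‖))) := by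
    refine mul_abs_le hBb ((abs_add_le _ _).trans ?_)
    gcongr
    · exact mul_abs_le (mul_abs_le hεa hQb) (mul_abs_le hqa hAb)
    · exact mul_abs_le hPa (mul_abs_le hεa hLQb)
  have htotal : |cLF N a₁ a₂ ε π x v|
      ≤ (ε * ((n:ℝ)^2 * M * s^2) * P⁻¹) * (K₂ * ‖v‖)
        + (K₂ * σ) * ((ε * ((n:ℝ)^2 * M * s^2)) * (((N:ℝ)/2 * (P⁻¹ * d⁻¹)) * (4*σ*‖v‖))
            + P⁻¹ * (ε * ((n:ℝ)^2 * (2*M*s) * ‖v‖))) := by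
    rw [happ]; exact (abs_add_le _ _).trans (by gcongr)
  set W := ε * (n:ℝ)^2 * M * K₂ * P⁻¹ * ‖v‖ with hW
  have hW0 : (0:ℝ) ≤ W := by
    have : (0:ℝ) ≤ ε * (n:ℝ)^2 * M * K₂ := by positivity
    positivity
  have hcancel : σ*σ*d⁻¹ = 1 := by rw [hσσ]; exact mul_inv_cancel₀ hd0.ne'
  have hEeq : (ε * ((n:ℝ)^2 * M * s^2) * P⁻¹) * (K₂ * ‖v‖)
        + (K₂ * σ) * ((ε * ((n:ℝ)^2 * M * s^2)) * (((N:ℝ)/2 * (P⁻¹ * d⁻¹)) * (4*σ*‖v‖))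
            + P⁻¹ * (ε * ((n:ℝ)^2 * (2*M*s) * ‖v‖)))
      = W * s^2 + W * (4*((N:ℝ)/2)*s^2) * (σ*σ*d⁻¹) + W * (2*s*σ) := by
    rw [hW]; ring
  have hinner : s^2 + 4*((N:ℝ)/2)*s^2 + 2*s*σ ≤ σ^2 * (3 + 4*((N:ℝ)/2)) := by
    have h1 : s*s ≤ σ*σ := mul_le_mul hsσ hsσ hs0 hσ0
    have h2 : ((N:ℝ)/2)*(s*s) ≤ ((N:ℝ)/2)*(σ*σ) := mul_le_mul_of_nonneg_left h1 hq0
    have h3 : s*σ ≤ σ*σ := mul_le_mul_of_nonneg_right hsσ hσ0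
    nlinarith
  calc |cLF N a₁ a₂ ε π x v|
      ≤ W * s^2 + W * (4*((N:ℝ)/2)*s^2) * (σ*σ*d⁻¹) + W * (2*s*σ) := htotal.trans hEeq.le
    _ = W * (s^2 + 4*((N:ℝ)/2)*s^2 + 2*s*σ) := by rw [hcancel]; ring
    _ ≤ W * (σ^2 * (3 + 4*((N:ℝ)/2))) := mul_le_mul_of_nonneg_left hinner hW0
    _ = ε * (n:ℝ)^2 * M * K₂ * (3 + 2*(N:ℝ)) * (σ^2 * P⁻¹) * ‖v‖ := by rw [hW]; ring

end PhiAux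

open PhiAux

set_option maxHeartbeats 2000000 in
/-- pointwise decay of `Φ` and `∇Φ` on the closed upper half-space, with a
constant depending only on `N`, `a₁`, `a₂`. -/
theorem Phi_pointwise_decay (N : ℕ) (hN : 4 ≤ N) (a₁ a₂ : ℝ) :
    ∃ C : ℝ, 0 < C ∧
      ∀ (ε : ℝ), 0 < ε → ∀ π : Fin (N - 1) → Fin (N - 1) → ℝ,
        (∀ i j, π i j = π j i) → (∑ i, π i i = 0) →
        ∀ Φ : HSp (N - 1) → ℝ,
          (∀ x : HSp (N - 1), Φ x =
            ε * (∑ i, ∑ j, π i j * x.1 i * x.1 j) /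
                (‖x.1‖ ^ 2 + (x.2 + 1) ^ 2) ^ ((N : ℝ) / 2) *
              (((N : ℝ) - 2) / 2 * (x.2 - 1)
                + a₁ * (x.2 + 1) / (‖x.1‖ ^ 2 + (x.2 + 1) ^ 2) ^ 2
                + a₂ / (‖x.1‖ ^ 2 + (x.2 + 1) ^ 2))) →
          ∀ x : HSp (N - 1), 0 ≤ x.2 →
            |Φ x| ≤ C * ε * (⨆ p : Fin (N - 1) × Fin (N - 1), |π p.1 p.2|)
                / (1 + rad x ^ (N - 3)) ∧
            ‖fderiv ℝ Φ x‖ ≤ C * ε * (⨆ p : Fin (N - 1) × Fin (N - 1), |π p.1 p.2|)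
                / (1 + rad x ^ (N - 2)) := by
  have hN2 : 2 ≤ N := by omega
  refine ⟨2*((N - 1 : ℕ):ℝ)^2*((N:ℝ)/2 + 9*|a₁| + 4*|a₂| + 1)*(3+2*(N:ℝ)) + 1,
    by positivity, ?_⟩
  intro ε hε π hsym htr Φ hΦ x hx
  clear hsym htr
  set K₂ : ℝ := (N:ℝ)/2 + 9*|a₁| + 4*|a₂| + 1 with hK₂def
  have hK₂0 : (0:ℝ) ≤ K₂ := by positivity
  set M := ⨆ p : Fin (N - 1) × Fin (N - 1), |π p.1 p.2| with hMdef
  have hMb : ∀ i j, |π i j| ≤ M := fun i j =>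
    le_ciSup (f := fun p : Fin (N - 1) × Fin (N - 1) => |π p.1 p.2|)
      (Set.Finite.bddAbove (Set.finite_range _)) (i, j)
  have hM0 : 0 ≤ M :=
    le_trans (abs_nonneg (π ⟨0, by omega⟩ ⟨0, by omega⟩)) (hMb _ _)
  -- geometry
  have hd1 : 1 ≤ Dfun x := one_le_Dfun x hx
  have hd0 : (0:ℝ) < Dfun x := lt_of_lt_of_le one_pos hd1
  set d := Dfun x with hdd
  set σ := Real.sqrt d with hσdef
  have hσ1 : 1 ≤ σ := by
    rw [hσdef, show (1:ℝ) = Real.sqrt 1 by simp]; exact Real.sqrt_le_sqrt hd1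
  have hσ0 : (0:ℝ) ≤ σ := Real.sqrt_nonneg _
  have hσσ : σ * σ = d := Real.mul_self_sqrt hd0.le
  set s := ‖x.1‖ with hsdef
  have hs0 : (0:ℝ) ≤ s := norm_nonneg _
  have hsσ : s ≤ σ := norm_fst_le_sqrtD x
  have hr0 : 0 ≤ rad x := Real.sqrt_nonneg _
  have hrσ : rad x ≤ σ := by
    rw [hσdef, hdd]
    refine Real.sqrt_le_sqrt ?_
    rw [Dfun_eq]; nlinarith [sq_nonneg s]
  set P := d ^ ((N:ℝ)/2) with hPdef
  have hP0 : (0:ℝ) < P := Real.rpow_pos_of_pos hd0 _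
  have hσN : σ^N = P := sqrt_pow_eq_rpow d hd0.le N
  have hPa : |P⁻¹| ≤ P⁻¹ := le_of_eq (abs_of_nonneg (by positivity))
  have hεa : |ε| ≤ ε := le_of_eq (abs_of_nonneg hε.le)
  have hQb : |Qval π x| ≤ ((N - 1 : ℕ):ℝ)^2 * M * s^2 := abs_Qval_le π x hM0 hMb
  have hBb : |Bval N a₁ a₂ x| ≤ K₂ * σ := abs_Bval_le N a₁ a₂ x hN2 hx
  have e2 : d ^ (-(2:ℝ)) = (d^2)⁻¹ := by
    rw [show (-(2:ℝ)) = -((2:ℕ):ℝ) by norm_num]; exact rpow_neg_ofNat d hd0 2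
  have e1 : d ^ (-(1:ℝ)) = d⁻¹ := by
    rw [show (-(1:ℝ)) = -((1:ℕ):ℝ) by norm_num, rpow_neg_ofNat d hd0 1, pow_one]
  have base : (0:ℝ) ≤ ε * M := mul_nonneg hε.le hM0
  have base2 : (0:ℝ) ≤ ((N - 1 : ℕ):ℝ)^2 * K₂ := by positivity
  constructor
  · -- value bound
    have hpos : (0:ℝ) < 1 + rad x ^ (N-3) :=
      add_pos_of_pos_of_nonneg one_pos (pow_nonneg hr0 _)
    have hΦx : Φ x = (ε * Qval π x * P⁻¹) * Bval N a₁ a₂ x := by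
      rw [hΦ x, ← Dfun_eq x, ← hdd]
      rw [Qval, Bval, e2, e1, ← hPdef]
      field_simp
    have hE : |Φ x| ≤ (ε * (((N - 1 : ℕ):ℝ)^2 * M * s^2) * P⁻¹) * (K₂ * σ) := by
      rw [hΦx]
      exact mul_abs_le (mul_abs_le (mul_abs_le hεa hQb) hPa) hBb
    rw [le_div_iff₀ hpos]
    have hs2 : s^2 ≤ σ^2 := pow_le_pow_left₀ hs0 hsσ 2
    have hrk : 1 + rad x ^ (N-3) ≤ 2 * σ^(N-3) := by
      have h1 : rad x ^ (N-3) ≤ σ^(N-3) := pow_le_pow_left₀ hr0 hrσ _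
      have h2 : (1:ℝ) ≤ σ^(N-3) := one_le_pow₀ hσ1
      linarith
    have hinner : s^2*σ*(1 + rad x ^ (N-3)) ≤ 2*(σ^2*σ*σ^(N-3)) := by
      calc s^2*σ*(1 + rad x ^ (N-3)) ≤ σ^2*σ*(2*σ^(N-3)) := by
            apply mul_le_mul (mul_le_mul hs2 (le_refl σ) hσ0 (by positivity)) hrk hpos.le
              (by positivity)
        _ = 2*(σ^2*σ*σ^(N-3)) := by ring
    have hσNeq : σ^2*σ*σ^(N-3) = σ^N := by
      rw [show σ^2*σ = σ^3 by ring, ← pow_add]; congr 1; omega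
    set W1 := ε * ((N - 1 : ℕ):ℝ)^2 * M * K₂ * P⁻¹ with hW1
    have hW10 : (0:ℝ) ≤ W1 := by
      have : (0:ℝ) ≤ ε * ((N - 1 : ℕ):ℝ)^2 * M * K₂ := by
        calc (0:ℝ) ≤ (ε * M) * (((N - 1 : ℕ):ℝ)^2 * K₂) := mul_nonneg base base2
          _ = ε * ((N - 1 : ℕ):ℝ)^2 * M * K₂ := by ring
      positivity
    calc |Φ x| * (1 + rad x ^ (N-3))
        ≤ ((ε * (((N - 1 : ℕ):ℝ)^2 * M * s^2) * P⁻¹) * (K₂ * σ)) * (1 + rad x ^ (N-3)) :=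
          mul_le_mul_of_nonneg_right hE hpos.le
      _ = W1 * (s^2*σ*(1 + rad x ^ (N-3))) := by rw [hW1]; ring
      _ ≤ W1 * (2*(σ^2*σ*σ^(N-3))) := mul_le_mul_of_nonneg_left hinner hW10
      _ = 2 * (ε * ((N - 1 : ℕ):ℝ)^2 * M * K₂) * (P⁻¹ * P) := by
          rw [hσNeq, hσN, hW1]; ring
      _ = 2 * (ε * ((N - 1 : ℕ):ℝ)^2 * M * K₂) := by
          rw [inv_mul_cancel₀ hP0.ne']; ring
      _ ≤ (2*((N - 1 : ℕ):ℝ)^2*K₂*(3+2*(N:ℝ)) + 1) * ε * M := by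
          nlinarith [mul_nonneg (mul_nonneg base base2) (by positivity : (0:ℝ) ≤ 2+2*(N:ℝ)),
            base]
  · -- derivative bound
    have hpos : (0:ℝ) < 1 + rad x ^ (N-2) :=
      add_pos_of_pos_of_nonneg one_pos (pow_nonneg hr0 _)
    have hU : IsOpen {y : HSp (N - 1) | 0 < Dfun y} := by
      apply isOpen_lt continuous_const
      exact (continuous_fst.inner continuous_fst).add
        ((continuous_snd.add continuous_const).mul (continuous_snd.add continuous_const))
    have hev : Φ =ᶠ[nhds x] Ffun N a₁ a₂ ε π := by
      refine Filter.eventuallyEq_of_mem (hU.mem_nhds hd0) ?_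
      intro y hy
      have hdy : (0:ℝ) < Dfun y := hy
      have e2y : (Dfun y) ^ (-(2:ℝ)) = ((Dfun y)^2)⁻¹ := by
        rw [show (-(2:ℝ)) = -((2:ℕ):ℝ) by norm_num]; exact rpow_neg_ofNat _ hdy 2
      have e1y : (Dfun y) ^ (-(1:ℝ)) = (Dfun y)⁻¹ := by
        rw [show (-(1:ℝ)) = -((1:ℕ):ℝ) by norm_num, rpow_neg_ofNat _ hdy 1, pow_one]
      have eqy : (Dfun y) ^ (-((N:ℝ)/2)) = ((Dfun y) ^ ((N:ℝ)/2))⁻¹ :=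
        Real.rpow_neg hdy.le _
      show Φ y = Ffun N a₁ a₂ ε π y
      rw [hΦ y, ← Dfun_eq y, Ffun, e2y, e1y, eqy]
      field_simp
    rw [hev.fderiv_eq, (hasFDerivAt_Ffun N a₁ a₂ ε π x hd0).fderiv]
    have hop : ‖cLF N a₁ a₂ ε π x‖
        ≤ ε * ((N - 1 : ℕ):ℝ)^2 * M * K₂ * (3 + 2*(N:ℝ)) * (σ^2 * P⁻¹) := by
      apply ContinuousLinearMap.opNorm_le_bound
      · have h0 : (0:ℝ) ≤ ε * ((N - 1 : ℕ):ℝ)^2 * M * K₂ := by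
          calc (0:ℝ) ≤ (ε * M) * (((N - 1 : ℕ):ℝ)^2 * K₂) := mul_nonneg base base2
            _ = _ := by ring
        positivity
      · intro v
        rw [Real.norm_eq_abs]
        exact abs_cLF_apply_le N a₁ a₂ ε π x v hN2 hx hε.le hM0 hMb
    rw [le_div_iff₀ hpos]
    have hrk : 1 + rad x ^ (N-2) ≤ 2 * σ^(N-2) := by
      have h1 : rad x ^ (N-2) ≤ σ^(N-2) := pow_le_pow_left₀ hr0 hrσ _
      have h2 : (1:ℝ) ≤ σ^(N-2) := one_le_pow₀ hσ1
      linarith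
    have hσNeq : σ^2*σ^(N-2) = σ^N := by rw [← pow_add]; congr 1; omega
    set W2 := ε * ((N - 1 : ℕ):ℝ)^2 * M * K₂ * (3 + 2*(N:ℝ)) * P⁻¹ with hW2
    have hW20 : (0:ℝ) ≤ W2 := by
      have : (0:ℝ) ≤ ε * ((N - 1 : ℕ):ℝ)^2 * M * K₂ := by
        calc (0:ℝ) ≤ (ε * M) * (((N - 1 : ℕ):ℝ)^2 * K₂) := mul_nonneg base base2
          _ = _ := by ring
      positivity
    have hinner : σ^2*(1 + rad x ^ (N-2)) ≤ 2*(σ^2*σ^(N-2)) := by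
      calc σ^2*(1 + rad x ^ (N-2)) ≤ σ^2*(2*σ^(N-2)) :=
            mul_le_mul_of_nonneg_left hrk (by positivity)
        _ = 2*(σ^2*σ^(N-2)) := by ring
    calc ‖cLF N a₁ a₂ ε π x‖ * (1 + rad x ^ (N-2))
        ≤ (ε * ((N - 1 : ℕ):ℝ)^2 * M * K₂ * (3 + 2*(N:ℝ)) * (σ^2 * P⁻¹))
            * (1 + rad x ^ (N-2)) := mul_le_mul_of_nonneg_right hop hpos.le
      _ = W2 * (σ^2*(1 + rad x ^ (N-2))) := by rw [hW2]; ring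
      _ ≤ W2 * (2*(σ^2*σ^(N-2))) := mul_le_mul_of_nonneg_left hinner hW20
      _ = 2 * (ε * ((N - 1 : ℕ):ℝ)^2 * M * K₂ * (3 + 2*(N:ℝ))) * (P⁻¹ * P) := by
          rw [hσNeq, hσN, hW2]; ring
      _ = 2 * (ε * ((N - 1 : ℕ):ℝ)^2 * M * K₂ * (3 + 2*(N:ℝ))) := by
          rw [inv_mul_cancel₀ hP0.ne']; ring
      _ ≤ (2*((N - 1 : ℕ):ℝ)^2*K₂*(3+2*(N:ℝ)) + 1) * ε * M := by
          nlinarith [mul_nonneg (mul_nonneg base base2) (by positivity : (0:ℝ) ≤ 3+2*(N:ℝ)),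
            base]
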